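/- (Lemma 4, time-asynchronous case, both directions.) For positive integers L, M, D with L ≥ 6 and M ≥ 1, set P = L + D and define F₂(D) = (D+1)·(8P² + 8PM + 10P + 6M − 5) and F₃(D) = 10P²·log₂P + 90P² + 20P·log₂P + 16PM + 6P. Then: (i) if D < (78 − 12L − 10M + √((12L + 10M − 78)² + 48(78L + 6M)))/24, then F₂(D) < F₃(D); and (ii) if D > (26 + 5·log₂L)/(2 − (5/6)·log₂e), then F₂(D) > F₃(D). -/

import Mathlib

set_option maxHeartbeats 2000000 in
theorem stmt_16 (L M D : ℕ) (hL : 6 ≤ L) (hM : 1 ≤ M) (hD : 1 ≤ D) :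
    let P : ℝ := (L : ℝ) + (D : ℝ)
    let F2 : ℝ := ((D : ℝ) + 1) * (8 * P ^ 2 + 8 * P * (M : ℝ) + 10 * P + 6 * (M : ℝ) - 5)
    let F3 : ℝ := 10 * P ^ 2 * Real.logb 2 P + 90 * P ^ 2 + 20 * P * Real.logb 2 P +
      16 * P * (M : ℝ) + 6 * P
    ((D : ℝ) <
        (78 - 12 * (L : ℝ) - 10 * (M : ℝ) +
            Real.sqrt ((12 * (L : ℝ) + 10 * (M : ℝ) - 78) ^ 2 +
              48 * (78 * (L : ℝ) + 6 * (M : ℝ)))) / 24 →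
      F2 < F3) ∧
    ((D : ℝ) > (26 + 5 * Real.logb 2 (L : ℝ)) / (2 - 5 / 6 * Real.logb 2 (Real.exp 1)) →
      F2 > F3) := by
  intro P F2 F3
  have hl : (6:ℝ) ≤ (L:ℝ) := by exact_mod_cast hL
  have hm : (1:ℝ) ≤ (M:ℝ) := by exact_mod_cast hM
  have hd : (1:ℝ) ≤ (D:ℝ) := by exact_mod_cast hD
  set l : ℝ := (L:ℝ)
  set m : ℝ := (M:ℝ)
  set d : ℝ := (D:ℝ)
  have hP7 : (7:ℝ) ≤ P := by simp only [P]; linarith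
  have hP0 : (0:ℝ) < P := by linarith
  have hlog2 : (0:ℝ) < Real.log 2 := Real.log_pos (by norm_num)
  -- lower bound on logb 2 P
  have hlbP : (14:ℝ)/5 ≤ Real.logb 2 P := by
    rw [Real.logb, le_div_iff₀ hlog2]
    have h1 : (14:ℝ) * Real.log 2 = Real.log (2^14) := by
      rw [Real.log_pow]; push_cast; ring
    have h2 : (5:ℝ) * Real.log P = Real.log (P^5) := by
      rw [Real.log_pow]; push_cast; ring
    have h3 : Real.log (2^14) ≤ Real.log (P^5) := by
      apply Real.log_le_log (by positivity)
      calc (2:ℝ)^14 ≤ 7^5 := by norm_num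
        _ ≤ P^5 := by apply pow_le_pow_left₀ (by norm_num) hP7
    nlinarith [h3]
  constructor
  · -- direction (i)
    intro h1
    -- derive the quadratic inequality (★)
    have hstar : 12*d^2 + (12*l + 10*m - 78)*d - 78*l - 6*m < 0 := by
      have h2 : 24*d + (12*l + 10*m - 78) <
          Real.sqrt ((12*l + 10*m - 78)^2 + 48*(78*l + 6*m)) := by linarith
      rcases le_or_gt (24*d + (12*l + 10*m - 78)) 0 with hc | hc
      · nlinarith
      · have h3 : (24*d + (12*l + 10*m - 78))^2 <
            (12*l + 10*m - 78)^2 + 48*(78*l + 6*m) :=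
          (Real.lt_sqrt hc.le).mp h2
        nlinarith
    -- rewrite star using P
    have hs : 12*d*P + 10*d*m < 78*P + 6*m := by
      have : P = l + d := rfl
      nlinarith [hstar]
    have hs' : (0:ℝ) ≤ 78*P + 6*m - 12*d*P - 10*d*m := by linarith
    have hF3low : 118*P^2 + 16*P*m + 62*P ≤ F3 := by
      have h1 : 28*P^2 ≤ 10*P^2 * Real.logb 2 P := by nlinarith [sq_nonneg P, hP0]
      have h2 : 56*P ≤ 20*P * Real.logb 2 P := by nlinarith [hP0]
      simp only [F3]; linarith
    have key : F2 < 118*P^2 + 16*P*m + 62*P := by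
      simp only [F2]
      nlinarith [mul_nonneg hs' hP0.le, hs', mul_nonneg hs' (by linarith : (0:ℝ) ≤ m),
        mul_nonneg (by linarith : (0:ℝ) ≤ P - 7) (by linarith : (0:ℝ) ≤ P),
        mul_nonneg (by linarith : (0:ℝ) ≤ P - 7) (by linarith : (0:ℝ) ≤ m),
        mul_nonneg (by linarith : (0:ℝ) ≤ d - 1) (by linarith : (0:ℝ) ≤ m)]
    linarith
  · -- direction (ii)
    intro h2
    have hce : Real.logb 2 (Real.exp 1) = 1 / Real.log 2 := by simp [Real.logb]
    have hlog2lb : (0.6931471803:ℝ) < Real.log 2 := Real.log_two_gt_d9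
    have hdenom : (0:ℝ) < 2 - 5/6 * Real.logb 2 (Real.exp 1) := by
      rw [hce]
      have h69 : (0.69:ℝ) < Real.log 2 := by linarith
      have h1 : 1 / Real.log 2 < 1 / (0.69:ℝ) :=
        one_div_lt_one_div_of_lt (by norm_num) h69
      have h2 : (1:ℝ) / (0.69:ℝ) = 100/69 := by norm_num
      rw [h2] at h1
      linarith
    have h2' : 26 + 5 * Real.logb 2 l < d * (2 - 5/6 * Real.logb 2 (Real.exp 1)) := by
      rw [gt_iff_lt, div_lt_iff₀ hdenom] at h2
      exact h2
    -- logb 2 P ≤ logb 2 l + (d/6)/log 2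
    have hl0 : (0:ℝ) < l := lt_of_lt_of_le (by norm_num) hl
    have hub : Real.logb 2 P ≤ Real.logb 2 l + (d/6) / Real.log 2 := by
      have hPl : Real.log P - Real.log l = Real.log (P / l) := (Real.log_div (by positivity) (ne_of_gt hl0)).symm
      have hle : Real.log (P / l) ≤ P / l - 1 := Real.log_le_sub_one_of_pos (by positivity)
      have hfrac : P / l - 1 = d / l := by
        field_simp [P]
        rw [show P = l + d from rfl]; ring
      have hdl : d / l ≤ d / 6 := by
        apply div_le_div_of_nonneg_left (by linarith) (by norm_num) hl
      have hlogP : Real.log P ≤ Real.log l + d/6 := by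
        have h := hle
        rw [hfrac] at h
        linarith
      rw [Real.logb, Real.logb, ← add_div]
      exact (div_le_div_iff_of_pos_right hlog2).mpr hlogP
    have hkey : 5 * Real.logb 2 P < 2*d - 26 := by
      rw [hce] at h2'
      have : d * (5/6 * (1/Real.log 2)) = 5 * ((d/6)/Real.log 2) := by ring
      nlinarith [hub, h2']
    have hd20 : 20 < d := by nlinarith [hlbP, hkey]
    have hF3up : F3 < 10*P^2 * ((2*d-26)/5) + 90*P^2 + 20*P*((2*d-26)/5) + 16*P*m + 6*P := by
      simp only [F3]
      have hq : Real.logb 2 P < (2*d-26)/5 := by linarith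
      nlinarith [mul_pos hP0 hP0, hP0, sq_nonneg P]
    simp only [F2, F3] at *
    nlinarith [mul_nonneg (by linarith : (0:ℝ) ≤ d - 20) (sq_nonneg P), hP0,
      mul_nonneg (by linarith : (0:ℝ) ≤ d - 1) (mul_nonneg hP0.le (by linarith : (0:ℝ) ≤ m)),
      mul_pos hP0 (by linarith : (0:ℝ) < m), mul_nonneg (by linarith : (0:ℝ) ≤ d-1) (by linarith : (0:ℝ) ≤ m)]
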